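/- Let G = (V, E) be a weighted undirected graph with positive weights, fix ε > 0, and let W_min be the minimum edge weight. Partition E into buckets B₀, B₁, ..., where Bᵢ = { e : W_min(1+ε)^i ≤ w(e) < W_min(1+ε)^{i+1} }. Consider the algorithm that processes buckets in increasing order, and for each bucket computes a spanning forest of the edges of the bucket that are not self-loops with respect to the connectivity of previously selected edges, adding those forest edges to F. Then the final F is a spanning forest of G, and its total weight satisfies W(F_OPT) ≤ W(F) ≤ (1+ε)·W(F_OPT), where F_OPT is a minimum-weight spanning forest of G. -/

import Mathlib

/- Greedy forest construction: process the listed edges in order, adding an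
edge to the current forest unless its endpoints are already connected
(i.e. the edge is a self-loop with respect to the current connectivity). -/
open Classical in
noncomputable def greedyForest {V : Type*} [DecidableEq V] :
    Finset (Sym2 V) → List (V × V) → Finset (Sym2 V)
  | F, [] => F
  | F, e :: l =>
    if (SimpleGraph.fromEdgeSet (↑F : Set (Sym2 V))).Reachable e.1 e.2 then
      greedyForest F l
    else
      greedyForest (insert s(e.1, e.2) F) l

/-- `F` is a spanning forest of `G`: a set of edges of `G` that is acyclic and
whose connectivity coincides with that of `G`. -/
def IsSpanningForest {V : Type*} (G : SimpleGraph V) (F : Finset (Sym2 V)) : Prop :=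
  (↑F : Set (Sym2 V)) ⊆ G.edgeSet ∧
  (SimpleGraph.fromEdgeSet (↑F : Set (Sym2 V))).IsAcyclic ∧
  ∀ u v, (SimpleGraph.fromEdgeSet (↑F : Set (Sym2 V))).Reachable u v ↔ G.Reachable u v

section AuxMSF
open SimpleGraph
variable {V : Type*}



/-- Reachability after inserting one edge. -/
lemma reach_insert_iff (s : Set (Sym2 V)) (a b u v : V) :
    (fromEdgeSet (insert s(a,b) s)).Reachable u v ↔
      (fromEdgeSet s).Reachable u v ∨
      ((fromEdgeSet s).Reachable u a ∧ (fromEdgeSet s).Reachable b v) ∨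
      ((fromEdgeSet s).Reachable u b ∧ (fromEdgeSet s).Reachable a v) := by
  constructor
  · rintro ⟨p⟩
    induction p with
    | nil => exact Or.inl (Reachable.refl _)
    | @cons x y z h p ih =>
      rw [fromEdgeSet_adj] at h
      obtain ⟨hm, hne⟩ := h
      rcases Set.mem_insert_iff.mp hm with he | hs
      · rw [Sym2.eq_iff] at he
        rcases he with ⟨rfl, rfl⟩ | ⟨rfl, rfl⟩
        · rcases ih with h1 | ⟨h2, h3⟩ | ⟨h2, h3⟩
          · exact Or.inr (Or.inl ⟨Reachable.refl _, h1⟩)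
          · exact Or.inr (Or.inl ⟨Reachable.refl _, h3⟩)
          · exact Or.inl h3
        · rcases ih with h1 | ⟨h2, h3⟩ | ⟨h2, h3⟩
          · exact Or.inr (Or.inr ⟨Reachable.refl _, h1⟩)
          · exact Or.inl h3
          · exact Or.inr (Or.inr ⟨Reachable.refl _, h3⟩)
      · have hadj : (fromEdgeSet s).Adj x y := (fromEdgeSet_adj _).mpr ⟨hs, hne⟩
        rcases ih with h1 | ⟨h2, h3⟩ | ⟨h2, h3⟩
        · exact Or.inl (hadj.reachable.trans h1)
        · exact Or.inr (Or.inl ⟨hadj.reachable.trans h2, h3⟩)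
        · exact Or.inr (Or.inr ⟨hadj.reachable.trans h2, h3⟩)
  · have hmono : fromEdgeSet s ≤ fromEdgeSet (insert s(a,b) s) :=
      fromEdgeSet_mono (Set.subset_insert _ _)
    have hab : (fromEdgeSet (insert s(a,b) s)).Reachable a b := by
      by_cases h : a = b
      · subst h; exact Reachable.refl _
      · exact ((fromEdgeSet_adj _).mpr ⟨Set.mem_insert _ _, h⟩).reachable
    rintro (h | ⟨h1, h2⟩ | ⟨h1, h2⟩)
    · exact h.mono hmono
    · exact ((h1.mono hmono).trans hab).trans (h2.mono hmono)
    · exact ((h1.mono hmono).trans hab.symm).trans (h2.mono hmono)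

lemma acyclic_anti {G H : SimpleGraph V} (hle : G ≤ H) (h : H.IsAcyclic) : G.IsAcyclic := by
  intro v c hc
  exact h (c.mapLe hle) (hc.mapLe hle)

lemma sdiff_le_fromEdgeSet {s : Set (Sym2 V)} {a b : V} (hnm : s(a,b) ∉ s) :
    fromEdgeSet s ≤ fromEdgeSet (insert s(a,b) s) \ fromEdgeSet {s(a,b)} := by
  rw [← edgeSet_subset_edgeSet]
  rw [edgeSet_sdiff, edgeSet_fromEdgeSet, edgeSet_fromEdgeSet, edgeSet_fromEdgeSet]
  intro x hx
  simp only [Set.mem_diff, Set.mem_setOf_eq, Set.mem_singleton_iff, Set.mem_insert_iff] at hx ⊢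
  obtain ⟨hx, hdx⟩ := hx
  refine ⟨⟨Or.inr hx, hdx⟩, ?_⟩
  rintro ⟨rfl, -⟩
  exact hnm hx

/-- Inserting a non-self-loop edge into an acyclic graph keeps it acyclic. -/
lemma acyclic_insert {s : Set (Sym2 V)} {a b : V} (hab : a ≠ b)
    (hnr : ¬ (fromEdgeSet s).Reachable a b)
    (h : (fromEdgeSet s).IsAcyclic) :
    (fromEdgeSet (insert s(a,b) s)).IsAcyclic := by
  have hnm : s(a,b) ∉ s := fun hm => hnr ((fromEdgeSet_adj _).mpr ⟨hm, hab⟩).reachable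
  intro v c hc
  by_cases he : s(a,b) ∈ c.edges
  · have := (adj_and_reachable_delete_edges_iff_exists_cycle
        (G := fromEdgeSet (insert s(a,b) s)) (v := a) (w := b)).mpr ⟨v, c, hc, he⟩
    have hr : (fromEdgeSet (insert s(a,b) s) \ fromEdgeSet {s(a,b)}).Reachable a b := this.2
    -- delete-edge graph has edges exactly s minus diagonal
    have hle : fromEdgeSet (insert s(a,b) s) \ fromEdgeSet {s(a,b)} ≤ fromEdgeSet s := by
      rw [← edgeSet_subset_edgeSet]
      rw [edgeSet_sdiff, edgeSet_fromEdgeSet, edgeSet_fromEdgeSet, edgeSet_fromEdgeSet]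
      intro x hx
      simp only [Set.mem_diff, Set.mem_setOf_eq, Set.mem_singleton_iff,
        Set.mem_insert_iff] at hx ⊢
      tauto
    exact hnr (hr.mono hle)
  · have hsub : ∀ e ∈ c.edges, e ∈ (fromEdgeSet s).edgeSet := by
      intro e hce
      have := c.edges_subset_edgeSet hce
      rw [edgeSet_fromEdgeSet] at this ⊢
      rcases this with ⟨hm, hd⟩
      rcases Set.mem_insert_iff.mp hm with rfl | hm'
      · exact absurd hce he
      · exact ⟨hm', hd⟩
    exact h (c.transfer _ hsub) (hc.transfer hsub)

/-- Conversely, in an acyclic graph the new edge is not redundant. -/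
lemma not_reachable_of_acyclic_insert {s : Set (Sym2 V)} {a b : V} (hab : a ≠ b)
    (hnm : s(a,b) ∉ s)
    (h : (fromEdgeSet (insert s(a,b) s)).IsAcyclic) :
    ¬ (fromEdgeSet s).Reachable a b := by
  intro hr
  have hadj : (fromEdgeSet (insert s(a,b) s)).Adj a b :=
    (fromEdgeSet_adj _).mpr ⟨Set.mem_insert _ _, hab⟩
  have hr' : (fromEdgeSet (insert s(a,b) s) \ fromEdgeSet {s(a,b)}).Reachable a b :=
    hr.mono (sdiff_le_fromEdgeSet hnm)
  obtain ⟨u, c, hc, hce⟩ := (adj_and_reachable_delete_edges_iff_exists_cycle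
      (G := fromEdgeSet (insert s(a,b) s))).mp ⟨hadj, hr'⟩
  exact h c hc

lemma card_comp_le_of_le [Fintype V] {G H : SimpleGraph V} (h : G ≤ H) :
    Nat.card H.ConnectedComponent ≤ Nat.card G.ConnectedComponent := by
  apply Nat.card_le_card_of_surjective (ConnectedComponent.map (Hom.ofLE h))
  intro c
  obtain ⟨v, rfl⟩ := c.exists_rep
  exact ⟨G.connectedComponentMk v, rfl⟩

lemma card_comp_eq_of_reach {G H : SimpleGraph V}
    (h : ∀ u v, G.Reachable u v ↔ H.Reachable u v) :
    Nat.card G.ConnectedComponent = Nat.card H.ConnectedComponent :=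
  Nat.card_congr (Quot.congrRight h)

/-- Inserting a new non-redundant edge decreases the component count by one. -/
lemma card_comp_insert [Fintype V] (s : Set (Sym2 V)) (a b : V) (hab : a ≠ b)
    (hnr : ¬ (fromEdgeSet s).Reachable a b) :
    Nat.card (fromEdgeSet (insert s(a,b) s)).ConnectedComponent + 1
      = Nat.card (fromEdgeSet s).ConnectedComponent := by
  classical
  set G0 := fromEdgeSet s with hG0
  set G1 := fromEdgeSet (insert s(a,b) s) with hG1
  haveI : Fintype G0.ConnectedComponent := Fintype.ofFinite _
  haveI : Fintype G1.ConnectedComponent := Fintype.ofFinite _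
  have hle : G0 ≤ G1 := fromEdgeSet_mono (Set.subset_insert _ _)
  set φ : G0.ConnectedComponent → G1.ConnectedComponent :=
    ConnectedComponent.map (Hom.ofLE hle) with hφ
  have hφmk : ∀ v, φ (G0.connectedComponentMk v) = G1.connectedComponentMk v := fun _ => rfl
  have hG1ab : G1.Reachable a b :=
    ((fromEdgeSet_adj _).mpr ⟨Set.mem_insert _ _, hab⟩ : G1.Adj a b).reachable
  have key : ∀ u v : V, G1.Reachable u v ↔
      G0.Reachable u v ∨ (G0.Reachable u a ∧ G0.Reachable b v) ∨
      (G0.Reachable u b ∧ G0.Reachable a v) := fun u v => reach_insert_iff s a b u v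
  have fiber : ∀ c : G1.ConnectedComponent,
      (Finset.univ.filter fun x => φ x = c).card
        = if c = G1.connectedComponentMk a then 2 else 1 := by
    intro c
    refine SimpleGraph.ConnectedComponent.ind (fun v => ?_) c
    show (Finset.univ.filter fun x => φ x = G1.connectedComponentMk v).card
        = if G1.connectedComponentMk v = G1.connectedComponentMk a then 2 else 1
    by_cases hc : G1.connectedComponentMk v = G1.connectedComponentMk a
    · rw [if_pos hc]
      have hset : (Finset.univ.filter fun x => φ x = G1.connectedComponentMk v)
          = {G0.connectedComponentMk a, G0.connectedComponentMk b} := by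
        ext x
        refine SimpleGraph.ConnectedComponent.ind (fun u => ?_) x
        simp only [Finset.mem_filter, Finset.mem_univ, true_and, hφmk,
          Finset.mem_insert, Finset.mem_singleton, ConnectedComponent.eq]
        constructor
        · intro h
          rcases (key u a).mp (h.trans (ConnectedComponent.exact hc)) with
            h1 | ⟨h1, h2⟩ | ⟨h1, h2⟩
          · exact Or.inl h1
          · exact Or.inl h1
          · exact Or.inr h1
        · rintro (h | h)
          · exact (h.mono hle).trans (ConnectedComponent.exact hc).symm
          · exact ((h.mono hle).trans hG1ab.symm).trans (ConnectedComponent.exact hc).symm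
      rw [hset]
      exact Finset.card_pair fun he => hnr (ConnectedComponent.exact he)
    · rw [if_neg hc]
      have hset : (Finset.univ.filter fun x => φ x = G1.connectedComponentMk v)
          = {G0.connectedComponentMk v} := by
        ext x
        refine SimpleGraph.ConnectedComponent.ind (fun u => ?_) x
        simp only [Finset.mem_filter, Finset.mem_univ, true_and, hφmk,
          Finset.mem_singleton, ConnectedComponent.eq]
        constructor
        · intro h
          rcases (key u v).mp h with h1 | ⟨h1, h2⟩ | ⟨h1, h2⟩
          · exact h1
          · exact absurd (ConnectedComponent.sound ((h2.mono hle).symm.trans hG1ab.symm)) hc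
          · exact absurd (ConnectedComponent.sound (h2.mono hle).symm) hc
        · intro h
          exact h.mono hle
      rw [hset, Finset.card_singleton]
  have hcount := Finset.card_eq_sum_card_fiberwise
    (f := φ) (s := Finset.univ) (t := Finset.univ) (fun x _ => Finset.mem_univ _)
  rw [Finset.card_univ] at hcount
  have : ∑ c ∈ Finset.univ, (Finset.univ.filter fun x => φ x = c).card
      = Fintype.card G1.ConnectedComponent + 1 := by
    rw [Finset.sum_congr rfl fun c _ => fiber c]
    have : ∀ c : G1.ConnectedComponent,
        (if c = G1.connectedComponentMk a then 2 else 1)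
          = 1 + (if c = G1.connectedComponentMk a then 1 else 0) := by
      intro c; split <;> rfl
    rw [Finset.sum_congr rfl fun c _ => this c, Finset.sum_add_distrib,
      Finset.sum_const, Finset.sum_ite_eq' Finset.univ (G1.connectedComponentMk a) (fun _ => 1),
      if_pos (Finset.mem_univ _), Finset.card_univ]
    simp [Nat.add_comm]
  rw [this] at hcount
  rw [Nat.card_eq_fintype_card, Nat.card_eq_fintype_card]
  omega

/-- A forest on `n` vertices with `c` components has `n - c` edges. -/
lemma forest_card [Fintype V] [DecidableEq V] (F : Finset (Sym2 V))
    (hd : ∀ e ∈ F, ¬ e.IsDiag)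
    (ha : (fromEdgeSet (↑F : Set (Sym2 V))).IsAcyclic) :
    F.card + Nat.card (fromEdgeSet (↑F : Set (Sym2 V))).ConnectedComponent
      = Fintype.card V := by
  classical
  induction F using Finset.induction_on with
  | empty =>
    simp only [Finset.coe_empty, fromEdgeSet_empty, Finset.card_empty, Nat.zero_add]
    have : Nat.card (⊥ : SimpleGraph V).ConnectedComponent = Nat.card V := by
      apply Nat.card_congr
      apply Equiv.symm
      refine Equiv.ofBijective (⊥ : SimpleGraph V).connectedComponentMk ⟨?_, ?_⟩
      · intro u v h
        simpa [reachable_bot] using ConnectedComponent.exact h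
      · intro c; exact c.exists_rep
    rw [this, Nat.card_eq_fintype_card]
  | @insert e t hnm ih =>
    obtain ⟨a, b⟩ := e
    have hab : a ≠ b := by
      have := hd s(a,b) (Finset.mem_insert_self _ _)
      simpa using this
    rw [Finset.coe_insert] at ha
    have hnm' : s(a,b) ∉ (↑t : Set (Sym2 V)) := by simpa using hnm
    have hnr := not_reachable_of_acyclic_insert hab hnm' ha
    have hat : (fromEdgeSet (↑t : Set (Sym2 V))).IsAcyclic :=
      acyclic_anti (fromEdgeSet_mono (Set.subset_insert _ _)) ha
    have hdt : ∀ e ∈ t, ¬ e.IsDiag := fun e he => hd e (Finset.mem_insert_of_mem he)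
    have hC := card_comp_insert (↑t : Set (Sym2 V)) a b hab hnr
    rw [Finset.card_insert_of_notMem hnm, Finset.coe_insert]
    have hihv := ih hdt hat
    have hC' : Nat.card (fromEdgeSet (insert (Quot.mk (Sym2.Rel V) (a,b))
        (↑t : Set (Sym2 V)))).ConnectedComponent + 1
        = Nat.card (fromEdgeSet (↑t : Set (Sym2 V))).ConnectedComponent := hC
    omega
/-- `F` is a spanning forest of `G` (copy of the pinned definition, proved against it later). -/

lemma forest_card_le [Fintype V] [DecidableEq V] (H : SimpleGraph V)
    (F1 F2 : Finset (Sym2 V))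
    (h1 : (↑F1 : Set (Sym2 V)) ⊆ H.edgeSet)
    (ha1 : (fromEdgeSet (↑F1 : Set (Sym2 V))).IsAcyclic)
    (h2 : (↑F2 : Set (Sym2 V)) ⊆ H.edgeSet)
    (ha2 : (fromEdgeSet (↑F2 : Set (Sym2 V))).IsAcyclic)
    (hr2 : ∀ u v, (fromEdgeSet (↑F2 : Set (Sym2 V))).Reachable u v ↔ H.Reachable u v) :
    F1.card ≤ F2.card := by
  have hd1 : ∀ e ∈ F1, ¬ e.IsDiag := fun e he => H.not_isDiag_of_mem_edgeSet (h1 he)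
  have hd2 : ∀ e ∈ F2, ¬ e.IsDiag := fun e he => H.not_isDiag_of_mem_edgeSet (h2 he)
  have hc1 := forest_card F1 hd1 ha1
  have hc2 := forest_card F2 hd2 ha2
  have hle1 : fromEdgeSet (↑F1 : Set (Sym2 V)) ≤ H := by
    rw [← edgeSet_subset_edgeSet, edgeSet_fromEdgeSet]
    exact fun x hx => h1 hx.1
  have hcomp1 : Nat.card H.ConnectedComponent
      ≤ Nat.card (fromEdgeSet (↑F1 : Set (Sym2 V))).ConnectedComponent :=
    card_comp_le_of_le hle1
  have hcomp2 : Nat.card (fromEdgeSet (↑F2 : Set (Sym2 V))).ConnectedComponent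
      = Nat.card H.ConnectedComponent := card_comp_eq_of_reach hr2
  omega

section Greedy
variable [DecidableEq V]

lemma greedy_nil (F : Finset (Sym2 V)) : greedyForest F [] = F := rfl

open Classical in
lemma greedy_cons_pos {F : Finset (Sym2 V)} {x : V × V} {l : List (V × V)}
    (h : (fromEdgeSet (↑F : Set (Sym2 V))).Reachable x.1 x.2) :
    greedyForest F (x :: l) = greedyForest F l := by
  rw [greedyForest, if_pos h]

open Classical in
lemma greedy_cons_neg {F : Finset (Sym2 V)} {x : V × V} {l : List (V × V)}
    (h : ¬ (fromEdgeSet (↑F : Set (Sym2 V))).Reachable x.1 x.2) :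
    greedyForest F (x :: l) = greedyForest (insert s(x.1, x.2) F) l := by
  rw [greedyForest, if_neg h]

lemma greedy_subset (l : List (V × V)) : ∀ F : Finset (Sym2 V), F ⊆ greedyForest F l := by
  induction l with
  | nil => intro F; exact fun e he => he
  | cons x l ih =>
    intro F
    by_cases h : (fromEdgeSet (↑F : Set (Sym2 V))).Reachable x.1 x.2
    · rw [greedy_cons_pos h]; exact ih F
    · rw [greedy_cons_neg h]; exact (Finset.subset_insert _ _).trans (ih _)

lemma greedy_mem (l : List (V × V)) : ∀ (F : Finset (Sym2 V)) (e : Sym2 V),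
    e ∈ greedyForest F l → e ∈ F ∨ ∃ p ∈ l, e = s(p.1, p.2) := by
  induction l with
  | nil => intro F e he; exact Or.inl he
  | cons x l ih =>
    intro F e he
    by_cases h : (fromEdgeSet (↑F : Set (Sym2 V))).Reachable x.1 x.2
    · rw [greedy_cons_pos h] at he
      rcases ih F e he with h1 | ⟨p, hp, rfl⟩
      · exact Or.inl h1
      · exact Or.inr ⟨p, List.mem_cons_of_mem _ hp, rfl⟩
    · rw [greedy_cons_neg h] at he
      rcases ih _ e he with h1 | ⟨p, hp, rfl⟩
      · rcases Finset.mem_insert.mp h1 with rfl | h2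
        · exact Or.inr ⟨x, List.mem_cons_self, rfl⟩
        · exact Or.inl h2
      · exact Or.inr ⟨p, List.mem_cons_of_mem _ hp, rfl⟩

lemma greedy_acyclic (l : List (V × V)) : ∀ F : Finset (Sym2 V),
    (fromEdgeSet (↑F : Set (Sym2 V))).IsAcyclic →
    (fromEdgeSet (↑(greedyForest F l) : Set (Sym2 V))).IsAcyclic := by
  induction l with
  | nil => intro F h; exact h
  | cons x l ih =>
    intro F h
    by_cases hr : (fromEdgeSet (↑F : Set (Sym2 V))).Reachable x.1 x.2
    · rw [greedy_cons_pos hr]; exact ih F h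
    · rw [greedy_cons_neg hr]
      refine ih _ ?_
      have hab : x.1 ≠ x.2 := fun he => hr (he ▸ Reachable.refl _)
      rw [Finset.coe_insert]
      exact acyclic_insert hab hr h

lemma greedy_reach (l : List (V × V)) : ∀ (F : Finset (Sym2 V)) (u v : V),
    (fromEdgeSet (↑(greedyForest F l) : Set (Sym2 V))).Reachable u v ↔
    (fromEdgeSet ((↑F : Set (Sym2 V)) ∪ {e | ∃ p ∈ l, e = s(p.1, p.2)})).Reachable u v := by
  induction l with
  | nil =>
    intro F u v
    simp [greedy_nil]
  | cons x l ih =>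
    intro F u v
    have hset : (↑F : Set (Sym2 V)) ∪ {e | ∃ p ∈ x :: l, e = s(p.1, p.2)}
        = insert s(x.1, x.2) ((↑F : Set (Sym2 V)) ∪ {e | ∃ p ∈ l, e = s(p.1, p.2)}) := by
      ext e
      simp only [Set.mem_union, Set.mem_setOf_eq, Set.mem_insert_iff, List.mem_cons]
      constructor
      · rintro (h | ⟨p, (rfl | hp), rfl⟩)
        · exact Or.inr (Or.inl h)
        · exact Or.inl rfl
        · exact Or.inr (Or.inr ⟨p, hp, rfl⟩)
      · rintro (h | h | ⟨p, hp, rfl⟩)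
        · exact Or.inr ⟨x, Or.inl rfl, h⟩
        · exact Or.inl h
        · exact Or.inr ⟨p, Or.inr hp, rfl⟩
    rw [hset]
    by_cases hr : (fromEdgeSet (↑F : Set (Sym2 V))).Reachable x.1 x.2
    · rw [greedy_cons_pos hr, ih F u v, reach_insert_iff]
      have hmono : fromEdgeSet (↑F : Set (Sym2 V)) ≤
          fromEdgeSet ((↑F : Set (Sym2 V)) ∪ {e | ∃ p ∈ l, e = s(p.1, p.2)}) :=
        fromEdgeSet_mono Set.subset_union_left
      have hab := hr.mono hmono
      constructor
      · exact Or.inl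
      · rintro (h | ⟨h1, h2⟩ | ⟨h1, h2⟩)
        · exact h
        · exact (h1.trans hab).trans h2
        · exact (h1.trans hab.symm).trans h2
    · rw [greedy_cons_neg hr, ih _ u v]
      rw [Finset.coe_insert, Set.insert_union]
  end Greedy
section Lists
variable [DecidableEq V]

lemma greedy_append (l₁ l₂ : List (V × V)) : ∀ F : Finset (Sym2 V),
    greedyForest F (l₁ ++ l₂) = greedyForest (greedyForest F l₁) l₂ := by
  induction l₁ with
  | nil => intro F; rfl
  | cons x xs ih =>
    intro F
    by_cases h : (fromEdgeSet (↑F : Set (Sym2 V))).Reachable x.1 x.2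
    · rw [List.cons_append, greedy_cons_pos h, greedy_cons_pos h, ih]
    · rw [List.cons_append, greedy_cons_neg h, greedy_cons_neg h, ih]

end Lists

lemma dropWhile_gt {α : Type*} (key : α → ℕ) (i : ℕ) :
    ∀ l : List α, l.Pairwise (fun p q => key p ≤ key q) →
    ∀ p ∈ l.dropWhile (fun p => decide (key p ≤ i)), i < key p := by
  intro l
  induction l with
  | nil => intro _ p hp; simp at hp
  | cons x xs ih =>
    intro hpw p hp
    rw [List.pairwise_cons] at hpw
    by_cases hx : key x ≤ i
    · rw [List.dropWhile_cons_of_pos (by simpa using hx)] at hp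
      exact ih hpw.2 p hp
    · rw [List.dropWhile_cons_of_neg (by simpa using hx)] at hp
      rcases List.mem_cons.mp hp with rfl | hp'
      · omega
      · exact lt_of_lt_of_le (not_le.mp hx) (hpw.1 p hp')

/-- Abel-summation style comparison: if the partial counts of `K` are dominated by
those of `F` at every threshold, then the (increasing-weight) total of `F` is at most
that of `K` up to a correction term. -/
lemma majorize_aux {α : Type*} (bucket : α → ℕ) (wgt : ℕ → ℝ) (hmono : Monotone wgt) :
    ∀ (n : ℕ) (F K : Finset α), (∀ e ∈ F, bucket e < n) → (∀ e ∈ K, bucket e < n) →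
    (∀ i : ℕ, (K.filter fun e => bucket e < i).card ≤ (F.filter fun e => bucket e < i).card) →
    ∑ e ∈ F, wgt (bucket e)
      ≤ ∑ e ∈ K, wgt (bucket e) + ((F.card : ℝ) - (K.card : ℝ)) * wgt n := by
  classical
  intro n
  induction n with
  | zero =>
    intro F K hF hK _
    have hF0 : F = ∅ := Finset.eq_empty_of_forall_notMem fun e he => by
      exact absurd (hF e he) (Nat.not_lt_zero _)
    have hK0 : K = ∅ := Finset.eq_empty_of_forall_notMem fun e he => by
      exact absurd (hK e he) (Nat.not_lt_zero _)
    subst hF0; subst hK0; simp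
  | succ n ih =>
    intro F K hF hK hcnt
    set F' := F.filter (fun e => bucket e < n) with hF'
    set Ft := F.filter (fun e => ¬ bucket e < n) with hFt
    set K' := K.filter (fun e => bucket e < n) with hK'
    set Kt := K.filter (fun e => ¬ bucket e < n) with hKt
    have hsplitF : ∑ e ∈ F', wgt (bucket e) + ∑ e ∈ Ft, wgt (bucket e)
        = ∑ e ∈ F, wgt (bucket e) :=
      Finset.sum_filter_add_sum_filter_not F _ _
    have hsplitK : ∑ e ∈ K', wgt (bucket e) + ∑ e ∈ Kt, wgt (bucket e)
        = ∑ e ∈ K, wgt (bucket e) :=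
      Finset.sum_filter_add_sum_filter_not K _ _
    have hFtn : ∀ e ∈ Ft, bucket e = n := by
      intro e he
      rw [hFt, Finset.mem_filter] at he
      have := hF e he.1
      omega
    have hKtn : ∀ e ∈ Kt, bucket e = n := by
      intro e he
      rw [hKt, Finset.mem_filter] at he
      have := hK e he.1
      omega
    have hsumFt : ∑ e ∈ Ft, wgt (bucket e) = (Ft.card : ℝ) * wgt n := by
      rw [Finset.sum_congr rfl fun e he => by rw [hFtn e he], Finset.sum_const,
        nsmul_eq_mul]
    have hsumKt : ∑ e ∈ Kt, wgt (bucket e) = (Kt.card : ℝ) * wgt n := by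
      rw [Finset.sum_congr rfl fun e he => by rw [hKtn e he], Finset.sum_const,
        nsmul_eq_mul]
    have hcnt' : ∀ i : ℕ,
        (K'.filter fun e => bucket e < i).card ≤ (F'.filter fun e => bucket e < i).card := by
      intro i
      have hKm : K'.filter (fun e => bucket e < i) = K.filter (fun e => bucket e < min n i) := by
        rw [hK', Finset.filter_filter]
        exact Finset.filter_congr fun e _ => by rw [lt_min_iff]
      have hFm : F'.filter (fun e => bucket e < i) = F.filter (fun e => bucket e < min n i) := by
        rw [hF', Finset.filter_filter]
        exact Finset.filter_congr fun e _ => by rw [lt_min_iff]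
      rw [hKm, hFm]
      exact hcnt _
    have hIH := ih F' K' (fun e he => (Finset.mem_filter.mp he).2)
      (fun e he => (Finset.mem_filter.mp he).2) hcnt'
    have hcardF : F'.card + Ft.card = F.card := Finset.card_filter_add_card_filter_not _
    have hcardK : K'.card + Kt.card = K.card := Finset.card_filter_add_card_filter_not _
    have hK'F' : K'.card ≤ F'.card := by
      have := hcnt n
      rwa [show K.filter (fun e => bucket e < n) = K' from rfl,
        show F.filter (fun e => bucket e < n) = F' from rfl] at this
    have hKF : K.card ≤ F.card := by
      have h1 := hcnt (n + 1)
      rwa [Finset.filter_true_of_mem hK, Finset.filter_true_of_mem hF] at h1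
    have hwle : wgt n ≤ wgt (n + 1) := hmono (Nat.le_succ n)
    have hΔ : (0 : ℝ) ≤ (F.card : ℝ) - (K.card : ℝ) := by
      have h : (K.card : ℝ) ≤ (F.card : ℝ) := by exact_mod_cast hKF
      linarith
    have hkey := mul_le_mul_of_nonneg_left hwle hΔ
    have hcF : (F.card : ℝ) = (F'.card : ℝ) + (Ft.card : ℝ) := by
      rw [← hcardF]; push_cast; ring
    have hcK : (K.card : ℝ) = (K'.card : ℝ) + (Kt.card : ℝ) := by
      rw [← hcardK]; push_cast; ring
    rw [← hsplitF, ← hsplitK, hsumFt, hsumKt]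
    rw [hcF, hcK] at hkey ⊢
    linarith

end AuxMSF

/-- Approximate minimum spanning forest via bucketing.  Partition the edges of
`G` into buckets `Bᵢ = {e : Wmin(1+ε)^i ≤ w(e) < Wmin(1+ε)^(i+1)}` and process
them greedily in any order sorted by bucket index, rejecting only self-loop
edges.  Then the resulting `F` is a spanning forest of `G` and
`W(F_OPT) ≤ W(F) ≤ (1+ε)·W(F_OPT)` for any minimum spanning forest `F_OPT`. -/
theorem approximate_msf_bucketing {V : Type*} [Fintype V] [DecidableEq V]
    (G : SimpleGraph V) (w : Sym2 V → ℝ) (ε Wmin : ℝ)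
    (hε : 0 < ε) (hWmin : 0 < Wmin)
    (hw : ∀ e ∈ G.edgeSet, Wmin ≤ w e)
    (bucket : Sym2 V → ℕ)
    (hbucket : ∀ e ∈ G.edgeSet,
      Wmin * (1 + ε) ^ (bucket e) ≤ w e ∧ w e < Wmin * (1 + ε) ^ (bucket e + 1))
    (l : List (V × V))
    (hladj : ∀ p ∈ l, G.Adj p.1 p.2)
    (hlcover : ∀ e ∈ G.edgeSet, ∃ p ∈ l, e = s(p.1, p.2))
    (hsorted : l.Pairwise fun p q => bucket s(p.1, p.2) ≤ bucket s(q.1, q.2)) :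
    IsSpanningForest G (greedyForest ∅ l) ∧
    ∀ Fopt : Finset (Sym2 V),
      (IsSpanningForest G Fopt ∧
        ∀ F', IsSpanningForest G F' → ∑ e ∈ Fopt, w e ≤ ∑ e ∈ F', w e) →
      (∑ e ∈ Fopt, w e ≤ ∑ e ∈ greedyForest ∅ l, w e ∧
        ∑ e ∈ greedyForest ∅ l, w e ≤ (1 + ε) * ∑ e ∈ Fopt, w e) := by
  classical
  set F := greedyForest ∅ l with hFdef
  have hSl : {e : Sym2 V | ∃ p ∈ l, e = s(p.1, p.2)} = G.edgeSet := by
    ext e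
    constructor
    · rintro ⟨p, hp, rfl⟩
      exact (hladj p hp)
    · intro he
      exact hlcover e he
  have hFsub : (↑F : Set (Sym2 V)) ⊆ G.edgeSet := by
    intro e he
    rcases greedy_mem l ∅ e he with h | ⟨p, hp, rfl⟩
    · simp at h
    · exact (hladj p hp)
  have hFacyc : (SimpleGraph.fromEdgeSet (↑F : Set (Sym2 V))).IsAcyclic := by
    refine greedy_acyclic l ∅ ?_
    rw [Finset.coe_empty, SimpleGraph.fromEdgeSet_empty]
    exact SimpleGraph.isAcyclic_bot
  have hFreach : ∀ u v, (SimpleGraph.fromEdgeSet (↑F : Set (Sym2 V))).Reachable u v ↔ G.Reachable u v := by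
    intro u v
    rw [hFdef, greedy_reach l ∅ u v, Finset.coe_empty, Set.empty_union, hSl,
      SimpleGraph.fromEdgeSet_edgeSet]
  have hSF : IsSpanningForest G F := ⟨hFsub, hFacyc, hFreach⟩
  refine ⟨hSF, ?_⟩
  rintro Fopt ⟨⟨hOsub, hOacyc, hOreach⟩, hOmin⟩
  refine ⟨hOmin F hSF, ?_⟩
  set wgt : ℕ → ℝ := fun i => Wmin * (1 + ε) ^ i with hwgt
  have h1ε : (1 : ℝ) ≤ 1 + ε := by linarith
  have h1εpos : (0 : ℝ) ≤ 1 + ε := by linarith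
  have hwmono : Monotone wgt := fun i j hij => by
    show Wmin * (1 + ε) ^ i ≤ Wmin * (1 + ε) ^ j
    exact mul_le_mul_of_nonneg_left (pow_le_pow_right₀ h1ε hij) hWmin.le
  -- per-threshold count domination
  have hcount : ∀ i : ℕ, (Fopt.filter fun e => bucket e ≤ i).card
      ≤ (F.filter fun e => bucket e ≤ i).card := by
    intro i
    set l₁ := l.takeWhile (fun p => decide (bucket s(p.1, p.2) ≤ i)) with hl₁
    set l₂ := l.dropWhile (fun p => decide (bucket s(p.1, p.2) ≤ i)) with hl₂
    have happ : l₁ ++ l₂ = l := List.takeWhile_append_dropWhile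
    have h₁mem : ∀ p ∈ l₁, bucket s(p.1, p.2) ≤ i := fun p hp => by
      simpa using List.mem_takeWhile_imp hp
    have h₂mem : ∀ p ∈ l₂, i < bucket s(p.1, p.2) :=
      dropWhile_gt (fun p => bucket s(p.1, p.2)) i l hsorted
    set F₁ := greedyForest ∅ l₁ with hF₁
    have hG₁ : F = greedyForest F₁ l₂ := by
      rw [hFdef, ← happ, greedy_append]
    have hfilter : F.filter (fun e => bucket e ≤ i) = F₁ := by
      ext e
      simp only [Finset.mem_filter]
      constructor
      · rintro ⟨heF, hbe⟩
        rcases greedy_mem l₂ F₁ e (hG₁ ▸ heF) with h | ⟨p, hp, rfl⟩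
        · exact h
        · exact absurd hbe (not_le.mpr (h₂mem p hp))
      · intro h
        refine ⟨hG₁ ▸ greedy_subset l₂ F₁ h, ?_⟩
        rcases greedy_mem l₁ ∅ e h with h0 | ⟨p, hp, rfl⟩
        · simp at h0
        · exact h₁mem p hp
    rw [hfilter]
    set S₁ : Set (Sym2 V) := {e | ∃ p ∈ l₁, e = s(p.1, p.2)} with hS₁
    have hl₁l : ∀ p ∈ l₁, p ∈ l := fun p hp => by
      rw [← happ]; exact List.mem_append_left _ hp
    have hS₁G : S₁ ⊆ G.edgeSet := by
      rintro e ⟨p, hp, rfl⟩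
      exact (hladj p (hl₁l p hp))
    have hedgeS₁ : (SimpleGraph.fromEdgeSet S₁).edgeSet = S₁ \ {e | e.IsDiag} := SimpleGraph.edgeSet_fromEdgeSet _
    refine forest_card_le (SimpleGraph.fromEdgeSet S₁) _ F₁ ?_ ?_ ?_ ?_ ?_
    · -- Fopt.filter edges in S₁
      intro e he
      rw [Finset.mem_coe, Finset.mem_filter] at he
      obtain ⟨heO, hbe⟩ := he
      have heG : e ∈ G.edgeSet := hOsub heO
      obtain ⟨p, hp, rfl⟩ := hlcover e heG
      have hp₁ : p ∈ l₁ := by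
        rcases (List.mem_append.mp (happ ▸ hp : p ∈ l₁ ++ l₂)) with h | h
        · exact h
        · exact absurd hbe (not_le.mpr (h₂mem p h))
      rw [hedgeS₁]
      exact ⟨⟨p, hp₁, rfl⟩, G.not_isDiag_of_mem_edgeSet heG⟩
    · exact acyclic_anti (SimpleGraph.fromEdgeSet_mono (by
        exact_mod_cast Finset.coe_subset.mpr (Finset.filter_subset _ _))) hOacyc
    · intro e he
      rw [Finset.mem_coe] at he
      rcases greedy_mem l₁ ∅ e he with h0 | ⟨p, hp, rfl⟩
      · simp at h0
      · rw [hedgeS₁]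
        refine ⟨⟨p, hp, rfl⟩, ?_⟩
        exact G.not_isDiag_of_mem_edgeSet (hladj p (hl₁l p hp))
    · refine greedy_acyclic l₁ ∅ ?_
      rw [Finset.coe_empty, SimpleGraph.fromEdgeSet_empty]
      exact SimpleGraph.isAcyclic_bot
    · intro u v
      rw [hF₁, greedy_reach l₁ ∅ u v, Finset.coe_empty, Set.empty_union]
  have hcardeq : F.card = Fopt.card :=
    le_antisymm (forest_card_le G F Fopt hFsub hFacyc hOsub hOacyc hOreach)
      (forest_card_le G Fopt F hOsub hOacyc hFsub hFacyc hFreach)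
  have hcount' : ∀ i : ℕ, (Fopt.filter fun e => bucket e < i).card
      ≤ (F.filter fun e => bucket e < i).card := by
    intro i
    cases i with
    | zero => simp
    | succ j =>
      simpa only [Nat.lt_succ_iff] using hcount j
  set N := (F ∪ Fopt).sup bucket + 1 with hN
  have hFN : ∀ e ∈ F, bucket e < N := fun e he =>
    Nat.lt_succ_of_le (Finset.le_sup (Finset.mem_union_left _ he))
  have hON : ∀ e ∈ Fopt, bucket e < N := fun e he =>
    Nat.lt_succ_of_le (Finset.le_sup (Finset.mem_union_right _ he))
  have hmaj := majorize_aux bucket wgt hwmono N F Fopt hFN hON hcount'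
  rw [hcardeq, sub_self, zero_mul, add_zero] at hmaj
  calc ∑ e ∈ F, w e
      ≤ ∑ e ∈ F, (1 + ε) * wgt (bucket e) := by
        refine Finset.sum_le_sum fun e he => ?_
        have hb := (hbucket e (hFsub he)).2
        have : Wmin * (1 + ε) ^ (bucket e + 1) = (1 + ε) * wgt (bucket e) := by
          show _ = (1 + ε) * (Wmin * (1 + ε) ^ (bucket e)); ring
        linarith
    _ = (1 + ε) * ∑ e ∈ F, wgt (bucket e) := by rw [Finset.mul_sum]
    _ ≤ (1 + ε) * ∑ e ∈ Fopt, wgt (bucket e) := by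
        exact mul_le_mul_of_nonneg_left hmaj h1εpos
    _ ≤ (1 + ε) * ∑ e ∈ Fopt, w e := by
        refine mul_le_mul_of_nonneg_left ?_ h1εpos
        exact Finset.sum_le_sum fun e he => (hbucket e (hOsub he)).1
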